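/- arXiv:1612.02873 — 3 statements merged into one kernel-verified Lean document; each statement's English description precedes it below -/
import Mathlib

section
/- Let (X, 𝒳, μ, T) be a weakly mixing PID invertible measure-preserving transformation of a probability space. Then for every integer n ≠ 0, the system (X, 𝒳, μ, Tⁿ) is also PID. -/
open MeasureTheory Filter

/-- A system `(X, μ, T)` is *pairwise independently determined* (PID) if for every `d ≥ 3`,
every pairwise independent `d`-fold self-joining of the system is the product measure `μ^d`. -/
def IsPID {X : Type*} [MeasurableSpace X] (μ : Measure X) (T : X → X) : Prop :=
  ∀ d : ℕ, 3 ≤ d → ∀ lam : Measure (Fin d → X), IsProbabilityMeasure lam →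
    Measure.map (fun x i => T (x i)) lam = lam →
    (∀ i : Fin d, Measure.map (fun x => x i) lam = μ) →
    (∀ i j : Fin d, i ≠ j → Measure.map (fun x => (x i, x j)) lam = μ.prod μ) →
    lam = Measure.pi (fun _ => μ)

open Set
open scoped ENNReal

section Auxiliary

variable {α : Type*} [MeasurableSpace α]

lemma absCont_inv_eq {f : α → α} {μ ν : Measure α} (hf : MeasurableEmbedding f)
    [IsProbabilityMeasure μ] [IsProbabilityMeasure ν]
    (he : Ergodic f μ) (hν : Measure.map f ν = ν) (hac : ν ≪ μ) : ν = μ := by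
  have hmap : Measure.map f μ = μ := he.toMeasurePreserving.map_eq
  have h1 : (fun x => ν.rnDeriv μ (f x)) =ᵐ[μ] ν.rnDeriv μ := by
    have h := hf.rnDeriv_map ν μ
    rwa [hν, hmap] at h
  obtain ⟨c, hc⟩ := he.ae_eq_const_of_ae_eq_comp₀
    (Measure.measurable_rnDeriv ν μ).nullMeasurable h1
  have hν2 : ν = μ.withDensity (fun _ => c) := by
    rw [← Measure.withDensity_rnDeriv_eq ν μ hac]
    exact withDensity_congr_ae hc
  rw [withDensity_const] at hν2
  have hc1 : c = 1 := by
    have h2 : ν Set.univ = (c • μ) Set.univ := by rw [hν2]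
    simpa using h2.symm
  rw [hν2, hc1, one_smul]

lemma ergodic_of_prod_map {f : α → α} {μ : Measure α} [IsProbabilityMeasure μ]
    (hf : MeasurePreserving f μ μ) (h : Ergodic (Prod.map f f) (μ.prod μ)) : Ergodic f μ := by
  refine ⟨hf, ⟨fun s hs hinv => ?_⟩⟩
  rw [eventuallyConst_set']
  have h2 : (Prod.map f f) ⁻¹' (s ×ˢ Set.univ) = s ×ˢ Set.univ := by
    rw [Set.preimage_prod_map_prod, hinv, Set.preimage_univ]
  have h3 := h.ae_empty_or_univ (hs.prod MeasurableSet.univ) h2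
  rcases h3 with h3 | h3
  · refine Or.inl ?_
    rw [ae_eq_empty] at h3 ⊢
    rw [Measure.prod_prod] at h3
    simpa using h3
  · refine Or.inr ?_
    rw [ae_eq_univ] at h3 ⊢
    have h4 : (μ.prod μ) ((s ×ˢ (Set.univ : Set α))ᶜ) = μ sᶜ := by
      have : ((s ×ˢ (Set.univ : Set α))ᶜ) = sᶜ ×ˢ (Set.univ : Set α) := by
        ext ⟨x, y⟩; simp
      rw [this, Measure.prod_prod]; simp
    rw [h4] at h3; exact h3

lemma mEmb_iterate {f : α → α} (hf : MeasurableEmbedding f) (m : ℕ) :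
    MeasurableEmbedding (f^[m]) := by
  induction m with
  | zero => simpa using MeasurableEmbedding.id
  | succ k ih => rw [Function.iterate_succ]; exact ih.comp hf

lemma geom_sum_root {m : ℕ} (hm : m ≠ 0) {ω : ℂ} (hω : IsPrimitiveRoot ω m) (r : ℕ) :
    ∑ j ∈ Finset.range m, ω ^ (j * r) = if m ∣ r then (m : ℂ) else 0 := by
  have hpow : ∀ j : ℕ, ω ^ (j * r) = (ω ^ r) ^ j := by
    intro j; rw [← pow_mul, mul_comm]
  simp_rw [hpow]
  by_cases hdvd : m ∣ r
  · have h1 : ω ^ r = 1 := (hω.pow_eq_one_iff_dvd r).2 hdvd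
    simp [h1, hdvd]
  · have h1 : ω ^ r ≠ 1 := fun h => hdvd ((hω.pow_eq_one_iff_dvd r).1 h)
    rw [geom_sum_eq h1]
    have h2 : (ω ^ r) ^ m = 1 := by
      rw [← pow_mul, mul_comm, pow_mul, hω.pow_eq_one, one_pow]
    simp [h2, hdvd]

/-- If `R × R` is ergodic (i.e. `R` is weakly mixing), then every positive power of `R`
is ergodic. -/
lemma ergodic_iterate {R : α → α} {μ : Measure α} [IsProbabilityMeasure μ]
    (hR : MeasurePreserving R μ μ)
    (hRR : Ergodic (Prod.map R R) (μ.prod μ)) (m : ℕ) (hm : m ≠ 0) :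
    Ergodic (R^[m]) μ := by
  have hRerg : Ergodic R μ := ergodic_of_prod_map hR hRR
  refine ⟨hR.iterate m, ⟨fun s hs hinv => ?_⟩⟩
  rw [Filter.eventuallyConst_set']
  -- it suffices to show `s` is a.e. invariant under `R`
  suffices hclaim : R ⁻¹' s =ᵐ[μ] s by
    exact hRerg.quasiErgodic.ae_empty_or_univ₀ hs.nullMeasurableSet hclaim
  rcases eq_or_lt_of_le (Nat.one_le_iff_ne_zero.2 hm) with h1 | h1
  · rw [← h1] at hinv; simpa using hinv.symm ▸ (Filter.EventuallyEq.refl _ _)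
  -- now `2 ≤ m`
  classical
  set a : ℕ → α → ℂ := fun k => (R^[k] ⁻¹' s).indicator (fun _ => (1 : ℂ)) with ha_def
  have hset : ∀ k, MeasurableSet (R^[k] ⁻¹' s) := fun k => (hR.measurable.iterate k) hs
  have ha_meas : ∀ k, Measurable (a k) := fun k => measurable_const.indicator (hset k)
  have ha_comp : ∀ k x, a k (R x) = a (k + 1) x := by
    intro k x
    simp only [ha_def, Set.indicator_apply, Set.mem_preimage, Function.iterate_succ_apply]
  have ha_per : ∀ x, a m x = a 0 x := by
    intro x
    simp only [ha_def, Set.indicator_apply, Set.mem_preimage, Function.iterate_zero, id_eq, hinv]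
  set ω : ℂ := Complex.exp (2 * Real.pi * Complex.I / m) with hω_def
  have hω : IsPrimitiveRoot ω m := Complex.isPrimitiveRoot_exp m hm
  have hωm : ω ^ m = 1 := hω.pow_eq_one
  have hωstar : ω * star ω = 1 := by
    rw [Complex.star_def, ← Complex.exp_conj]
    have : (starRingEnd ℂ) (2 * Real.pi * Complex.I / m) = -(2 * Real.pi * Complex.I / m) := by
      simp [map_div₀, Complex.conj_I, Complex.conj_ofReal, map_ofNat]
      ring
    rw [hω_def, this, ← Complex.exp_add]
    simp
  set f : ℕ → α → ℂ := fun j x => ∑ k ∈ Finset.range m, ω ^ (j * k) * a k x with hf_def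
  have hf_meas : ∀ j, Measurable (f j) := by
    intro j
    exact Finset.measurable_sum _ fun k _ => (ha_meas k).const_mul _
  have hcomp : ∀ j x, ω ^ j * f j (R x) = f j x := by
    intro j x
    have h0 : ω ^ j * f j (R x) = ∑ k ∈ Finset.range m, ω ^ (j * (k + 1)) * a (k + 1) x := by
      rw [hf_def, Finset.mul_sum]
      refine Finset.sum_congr rfl fun k _ => ?_
      rw [ha_comp k x, ← mul_assoc, ← pow_add]
      congr 2
      ring
    set v : ℕ → ℂ := fun k => ω ^ (j * k) * a k x with hv_def
    have hvm : v m = v 0 := by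
      simp only [hv_def]
      rw [ha_per x, mul_comm j m, pow_mul, hωm, one_pow, Nat.mul_zero, pow_zero]
    have h2 := Finset.sum_range_succ' v m
    have h3 := Finset.sum_range_succ v m
    have h4 : ∑ k ∈ Finset.range m, v (k + 1) = ∑ k ∈ Finset.range m, v k := by
      have := h2.symm.trans h3
      rw [hvm] at this
      exact add_right_cancel this
    rw [h0]
    exact h4
  have hint : ∀ j, Integrable (f j) μ := by
    intro j
    refine integrable_finset_sum _ fun k _ => ?_
    exact ((integrable_const (1 : ℂ)).indicator (hset k)).const_mul _
  -- each nontrivial frequency vanishes a.e.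
  have hzero : ∀ j, 0 < j → j < m → ∀ᵐ x ∂μ, f j x = 0 := by
    intro j hj0 hjm
    have hωj1 : ω ^ j ≠ 1 := by
      intro h
      have := (hω.pow_eq_one_iff_dvd j).1 h
      exact absurd (Nat.le_of_dvd hj0 this) (not_le.2 hjm)
    have hI0 : ∫ x, f j x ∂μ = 0 := by
      have hmap : ∫ x, f j (R x) ∂μ = ∫ x, f j x ∂μ := by
        have h := integral_map (μ := μ) (f := f j) hR.measurable.aemeasurable
          (by rw [hR.map_eq]; exact (hf_meas j).aestronglyMeasurable)
        rw [hR.map_eq] at h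
        exact h.symm
      have h2 : ω ^ j * ∫ x, f j (R x) ∂μ = ∫ x, f j x ∂μ := by
        rw [← integral_const_mul]
        exact integral_congr_ae (Filter.Eventually.of_forall fun x => hcomp j x)
      rw [hmap] at h2
      have h3 : (ω ^ j - 1) * ∫ x, f j x ∂μ = 0 := by
        rw [sub_mul, one_mul, h2, sub_self]
      rcases mul_eq_zero.1 h3 with h | h
      · exact absurd (sub_eq_zero.1 h) hωj1
      · exact h
    set F : α × α → ℂ := fun p => f j p.1 * star (f j p.2) with hF_def
    have hFmeas : Measurable F :=
      ((hf_meas j).comp measurable_fst).mul (continuous_star.measurable.comp ((hf_meas j).comp measurable_snd))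
    have hωjstar : ω ^ j * star (ω ^ j) = 1 := by
      rw [star_pow, ← mul_pow, hωstar, one_pow]
    have hFcomp : F ∘ (Prod.map R R) = F := by
      funext p
      show f j (R p.1) * star (f j (R p.2)) = f j p.1 * star (f j p.2)
      calc f j (R p.1) * star (f j (R p.2))
          = (ω ^ j * star (ω ^ j)) * (f j (R p.1) * star (f j (R p.2))) := by
            rw [hωjstar, one_mul]
        _ = (ω ^ j * f j (R p.1)) * star (ω ^ j * f j (R p.2)) := by
            rw [star_mul']; ring
        _ = f j p.1 * star (f j p.2) := by rw [hcomp, hcomp]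
    obtain ⟨c, hc⟩ := hRR.ae_eq_const_of_ae_eq_comp₀ hFmeas.nullMeasurable
      (Filter.EventuallyEq.of_eq hFcomp)
    have hc0 : c = 0 := by
      have h1 : ∫ p, F p ∂(μ.prod μ) = c := by
        rw [integral_congr_ae hc]
        simp [Function.const]
      have h2 : ∫ p, F p ∂(μ.prod μ) = 0 := by
        rw [hF_def]
        have := integral_prod_mul (μ := μ) (ν := μ) (f j) (fun y => star (f j y))
        rw [this, hI0, zero_mul]
      rw [h2] at h1; exact h1.symm
    rw [hc0] at hc
    have hN : μ {x | f j x ≠ 0} = 0 := by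
      have hF0 : (μ.prod μ) {p : α × α | F p ≠ 0} = 0 := by
        have h' := ae_iff.1 hc
        simpa [Function.const] using h'
      have hsetN : {p : α × α | F p ≠ 0} = {x | f j x ≠ 0} ×ˢ {x | f j x ≠ 0} := by
        ext ⟨x, y⟩
        simp [hF_def, mul_ne_zero_iff, star_eq_zero]
      rw [hsetN, Measure.prod_prod, mul_self_eq_zero] at hF0
      exact hF0
    rw [ae_iff]
    simpa using hN
  -- combine the finitely many a.e. statements
  have hae : ∀ᵐ x ∂μ, ∀ j ∈ (↑(Finset.Ioo 0 m) : Set ℕ), f j x = 0 := by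
    refine (MeasureTheory.ae_ball_iff (Finset.Ioo 0 m).countable_toSet).2 ?_
    intro j hj
    rw [Finset.coe_Ioo, Set.mem_Ioo] at hj
    exact hzero j hj.1 hj.2
  have key : ∀ᵐ x ∂μ, a 1 x = a 0 x := by
    refine hae.mono fun x hx => ?_
    have hP : ∀ r : ℕ, ∑ j ∈ Finset.range m, ω ^ (j * r) * f j x
        = ∑ k ∈ Finset.range m, (if m ∣ (r + k) then (m : ℂ) else 0) * a k x := by
      intro r
      have h1 : ∀ j, ω ^ (j * r) * f j x = ∑ k ∈ Finset.range m, ω ^ (j * (r + k)) * a k x := by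
        intro j
        rw [hf_def, Finset.mul_sum]
        refine Finset.sum_congr rfl fun k _ => ?_
        rw [← mul_assoc, ← pow_add, Nat.mul_add]
      simp_rw [h1]
      rw [Finset.sum_comm]
      refine Finset.sum_congr rfl fun k _ => ?_
      rw [← Finset.sum_mul]
      congr 1
      exact geom_sum_root hm hω (r + k)
    have hL : ∀ r : ℕ, ∑ j ∈ Finset.range m, ω ^ (j * r) * f j x = f 0 x := by
      intro r
      rw [Finset.sum_eq_single 0]
      · simp
      · intro j hj hne
        have hj' : f j x = 0 := hx j (Finset.mem_coe.2 (Finset.mem_Ioo.2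
          ⟨Nat.pos_of_ne_zero hne, Finset.mem_range.1 hj⟩))
        rw [hj', mul_zero]
      · intro h
        exact absurd (Finset.mem_range.2 (by omega)) h
    have hr0 : f 0 x = (m : ℂ) * a 0 x := by
      rw [← hL 0, hP 0]
      rw [Finset.sum_eq_single 0]
      · simp
      · intro k hk hne
        have : ¬ m ∣ (0 + k) := by
          rw [zero_add]
          intro hdvd
          exact absurd (Nat.le_of_dvd (Nat.pos_of_ne_zero hne) hdvd)
            (not_le.2 (Finset.mem_range.1 hk))
        rw [if_neg this, zero_mul]
      · intro h
        exact absurd (Finset.mem_range.2 (by omega)) h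
    have hr1 : f 0 x = (m : ℂ) * a 1 x := by
      rw [← hL (m - 1), hP (m - 1)]
      rw [Finset.sum_eq_single 1]
      · have : m ∣ (m - 1 + 1) := by
          have : m - 1 + 1 = m := by omega
          rw [this]
        rw [if_pos this]
      · intro k hk hne
        have : ¬ m ∣ (m - 1 + k) := by
          intro hdvd
          obtain ⟨c, hc⟩ := hdvd
          have hk' := Finset.mem_range.1 hk
          rcases Nat.lt_or_ge c 2 with hc2 | hc2
          · interval_cases c <;> omega
          · have : m * 2 ≤ m * c := Nat.mul_le_mul_left m hc2
            omega
        rw [if_neg this, zero_mul]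
      · intro h
        exact absurd (Finset.mem_range.2 (by omega)) h
    have := hr0.symm.trans hr1
    exact (mul_left_cancel₀ (Nat.cast_ne_zero.2 hm) this).symm
  refine (Filter.eventuallyEq_set.2 ?_)
  refine key.mono fun x hx => ?_
  simp only [ha_def, Set.indicator_apply, Set.mem_preimage, Function.iterate_one,
    Function.iterate_zero, id_eq] at hx
  by_cases h0 : x ∈ s <;> by_cases h1 : R x ∈ s <;> simp_all

section PiLemmas

variable {X : Type*} [MeasurableSpace X] (μ : Measure X) [IsProbabilityMeasure μ] {d : ℕ}

lemma map_eval_pi (i : Fin d) :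
    Measure.map (fun x : Fin d → X => x i) (Measure.pi fun _ => μ) = μ := by
  ext A hA
  rw [Measure.map_apply (measurable_pi_apply i) hA]
  have h1 : (fun x : Fin d → X => x i) ⁻¹' A
      = Set.pi Set.univ (Function.update (fun _ => Set.univ) i A) := by
    rw [← Set.eval_preimage]
  rw [h1, Measure.pi_pi]
  have h2 : ∀ j : Fin d, μ (Function.update (fun _ => (Set.univ : Set X)) i A j)
      = if j = i then μ A else 1 := by
    intro j
    by_cases h : j = i
    · subst h; simp [Function.update_self]
    · simp [Function.update_of_ne h, h]
  rw [Finset.prod_congr rfl fun j _ => h2 j, Finset.prod_ite_eq' Finset.univ i fun _ => μ A]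
  simp

lemma map_pair_pi {i j : Fin d} (hij : i ≠ j) :
    Measure.map (fun x : Fin d → X => (x i, x j)) (Measure.pi fun _ => μ) = μ.prod μ := by
  classical
  have hmeas : Measurable (fun x : Fin d → X => (x i, x j)) :=
    (measurable_pi_apply i).prodMk (measurable_pi_apply j)
  symm
  refine Measure.prod_eq fun s t hs ht => ?_
  rw [Measure.map_apply hmeas (hs.prod ht), Set.mk_preimage_prod]
  have h1 : (fun x : Fin d → X => x i) ⁻¹' s ∩ (fun x : Fin d → X => x j) ⁻¹' t
      = Set.pi Set.univ (fun k => if k = i then s else if k = j then t else Set.univ) := by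
    ext x
    simp only [Set.mem_inter_iff, Set.mem_preimage, Set.mem_pi, Set.mem_univ, true_implies]
    constructor
    · rintro ⟨hx1, hx2⟩ k
      split_ifs with hk1 hk2
      · subst hk1; exact hx1
      · subst hk2; exact hx2
      · trivial
    · intro h
      constructor
      · have hi := h i; rwa [if_pos rfl] at hi
      · have hj := h j; rwa [if_neg (Ne.symm hij), if_pos rfl] at hj
  rw [h1, Measure.pi_pi]
  have h2 : ∀ k : Fin d, μ (if k = i then s else if k = j then t else Set.univ)
      = if k = i then μ s else if k = j then μ t else 1 := by
    intro k
    split_ifs <;> simp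
  rw [Finset.prod_congr rfl fun k _ => h2 k]
  rw [← Finset.mul_prod_erase Finset.univ _ (Finset.mem_univ i),
    ← Finset.mul_prod_erase _ _ (Finset.mem_erase.2 ⟨Ne.symm hij, Finset.mem_univ j⟩)]
  rw [if_pos rfl, if_neg (Ne.symm hij), if_pos rfl]
  rw [Finset.prod_eq_one, mul_one]
  intro k hk
  rw [Finset.mem_erase, Finset.mem_erase] at hk
  rw [if_neg hk.2.1, if_neg hk.1]

/-- PID + weak mixing implies the `d`-fold product transformation is ergodic. -/
lemma ergodic_pi_of_pid (T : Equiv.Perm X)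
    (hT : MeasurePreserving T μ μ) (hT' : MeasurePreserving T.symm μ μ)
    (hwm : Ergodic (Prod.map ⇑T ⇑T) (μ.prod μ)) (hpid : IsPID μ ⇑T)
    (d : ℕ) (hd : 3 ≤ d) :
    Ergodic (fun (x : Fin d → X) i => T (x i)) (Measure.pi fun _ => μ) := by
  classical
  set π : Measure (Fin d → X) := Measure.pi fun _ => μ with hπ_def
  set Td : (Fin d → X) → (Fin d → X) := fun x i => T (x i) with hTd_def
  have hTd : MeasurePreserving Td π π := measurePreserving_pi _ _ (fun _ => hT)
  have hTdmeas : Measurable Td := hTd.measurable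
  have ErgT : Ergodic (⇑T) μ := ergodic_of_prod_map hT hwm
  have embT : MeasurableEmbedding (⇑T) :=
    MeasurableEquiv.measurableEmbedding ⟨T, hT.measurable, hT'.measurable⟩
  have embTT : MeasurableEmbedding (Prod.map ⇑T ⇑T) := by
    let e : X × X ≃ᵐ X × X :=
      ⟨Equiv.prodCongr T T,
        (hT.measurable.comp measurable_fst).prodMk (hT.measurable.comp measurable_snd),
        (hT'.measurable.comp measurable_fst).prodMk (hT'.measurable.comp measurable_snd)⟩
    exact (rfl : Prod.map ⇑T ⇑T = ⇑e) ▸ e.measurableEmbedding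
  refine ⟨hTd, ⟨fun s hs hinv => ?_⟩⟩
  rw [Filter.eventuallyConst_set']
  by_contra hcon
  push_neg at hcon
  obtain ⟨hne, hnu⟩ := hcon
  have hs0 : π s ≠ 0 := fun h => hne (ae_eq_empty.2 h)
  have hs1 : π sᶜ ≠ 0 := by
    intro h
    exact hnu (ae_eq_univ.2 h)
  -- normalized restriction
  set ν : Measure (Fin d → X) := (π s)⁻¹ • π.restrict s with hν_def
  have hsfin : π s ≠ ⊤ := (measure_lt_top π s).ne
  have hνprob : IsProbabilityMeasure ν := by
    constructor
    rw [hν_def, Measure.smul_apply, Measure.restrict_apply MeasurableSet.univ,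
      Set.univ_inter, smul_eq_mul]
    exact ENNReal.inv_mul_cancel hs0 hsfin
  have hνac : ν ≪ π := by
    refine Measure.AbsolutelyContinuous.mk fun A hA h0 => ?_
    rw [hν_def, Measure.smul_apply, Measure.restrict_apply hA, smul_eq_mul]
    have : π (A ∩ s) = 0 := measure_mono_null Set.inter_subset_left h0
    rw [this, mul_zero]
  have hνinv : Measure.map Td ν = ν := by
    ext A hA
    rw [Measure.map_apply hTdmeas hA, hν_def, Measure.smul_apply, Measure.smul_apply,
      Measure.restrict_apply (hTdmeas hA), Measure.restrict_apply hA, smul_eq_mul, smul_eq_mul]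
    congr 1
    have h1 : Td ⁻¹' A ∩ s = Td ⁻¹' (A ∩ s) := by rw [Set.preimage_inter, hinv]
    rw [h1, ← Measure.map_apply hTdmeas (hA.inter hs), hTd.map_eq]
  have hνmarg : ∀ i : Fin d, Measure.map (fun x => x i) ν = μ := by
    intro i
    have hmeas : Measurable (fun x : Fin d → X => x i) := measurable_pi_apply i
    have hprob : IsProbabilityMeasure (Measure.map (fun x : Fin d → X => x i) ν) :=
      Measure.isProbabilityMeasure_map hmeas.aemeasurable
    have hinv2 : Measure.map (⇑T) (Measure.map (fun x : Fin d → X => x i) ν)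
        = Measure.map (fun x : Fin d → X => x i) ν := by
      rw [Measure.map_map hT.measurable hmeas]
      have hcm : (⇑T ∘ fun x : Fin d → X => x i) = (fun x : Fin d → X => x i) ∘ Td := rfl
      rw [hcm, ← Measure.map_map hmeas hTdmeas, hνinv]
    have hac2 : Measure.map (fun x : Fin d → X => x i) ν ≪ μ := by
      refine Measure.AbsolutelyContinuous.mk fun A hA h0 => ?_
      rw [Measure.map_apply hmeas hA]
      refine hνac ?_
      have := map_eval_pi μ (d := d) i
      rw [← this] at h0
      rwa [Measure.map_apply hmeas hA] at h0
    exact absCont_inv_eq embT ErgT hinv2 hac2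
  have hνpair : ∀ i j : Fin d, i ≠ j → Measure.map (fun x => (x i, x j)) ν = μ.prod μ := by
    intro i j hij
    have hmeas : Measurable (fun x : Fin d → X => (x i, x j)) :=
      (measurable_pi_apply i).prodMk (measurable_pi_apply j)
    have hprob : IsProbabilityMeasure (Measure.map (fun x : Fin d → X => (x i, x j)) ν) :=
      Measure.isProbabilityMeasure_map hmeas.aemeasurable
    have hinv2 : Measure.map (Prod.map ⇑T ⇑T) (Measure.map (fun x : Fin d → X => (x i, x j)) ν)
        = Measure.map (fun x : Fin d → X => (x i, x j)) ν := by
      rw [Measure.map_map (hT.measurable.prodMap hT.measurable) hmeas]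
      have hcm : (Prod.map ⇑T ⇑T ∘ fun x : Fin d → X => (x i, x j))
          = (fun x : Fin d → X => (x i, x j)) ∘ Td := rfl
      rw [hcm, ← Measure.map_map hmeas hTdmeas, hνinv]
    have hac2 : Measure.map (fun x : Fin d → X => (x i, x j)) ν ≪ μ.prod μ := by
      refine Measure.AbsolutelyContinuous.mk fun A hA h0 => ?_
      rw [Measure.map_apply hmeas hA]
      refine hνac ?_
      have := map_pair_pi μ (d := d) hij
      rw [← this] at h0
      rwa [Measure.map_apply hmeas hA] at h0
    exact absCont_inv_eq embTT hwm hinv2 hac2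
  have hfinal := hpid d hd ν hνprob hνinv hνmarg hνpair
  -- contradiction : ν sᶜ = 0 but π sᶜ ≠ 0
  have h1 : ν sᶜ = 0 := by
    rw [hν_def, Measure.smul_apply, Measure.restrict_apply hs.compl, smul_eq_mul]
    rw [Set.compl_inter_self, measure_empty, mul_zero]
  rw [hfinal] at h1
  exact hs1 h1

lemma ergodic_prod_pi_of_pid (T : Equiv.Perm X)
    (hT : MeasurePreserving T μ μ) (hT' : MeasurePreserving T.symm μ μ)
    (hwm : Ergodic (Prod.map ⇑T ⇑T) (μ.prod μ)) (hpid : IsPID μ ⇑T)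
    (d : ℕ) (hd : 3 ≤ d) :
    Ergodic (Prod.map (fun (x : Fin d → X) i => T (x i)) (fun (x : Fin d → X) i => T (x i)))
      ((Measure.pi fun _ : Fin d => μ).prod (Measure.pi fun _ : Fin d => μ)) := by
  classical
  have hbig := ergodic_pi_of_pid μ T hT hT' hwm hpid (d + d) (by omega)
  set e1 : (Fin (d + d) → X) ≃ᵐ (Fin d ⊕ Fin d → X) :=
    (MeasurableEquiv.piCongrLeft (fun _ => X) finSumFinEquiv).symm with he1_def
  set e2 : (Fin d ⊕ Fin d → X) ≃ᵐ (Fin d → X) × (Fin d → X) :=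
    MeasurableEquiv.sumPiEquivProdPi (fun _ => X) with he2_def
  set e : (Fin (d + d) → X) ≃ᵐ (Fin d → X) × (Fin d → X) := e1.trans e2 with he_def
  have hmp1 : MeasurePreserving e1 (Measure.pi fun _ : Fin (d + d) => μ)
      (Measure.pi fun _ : Fin d ⊕ Fin d => μ) := by
    have h := measurePreserving_piCongrLeft (fun _ : Fin (d + d) => μ) finSumFinEquiv
    exact h.symm _
  have hmp2 : MeasurePreserving e2 (Measure.pi fun _ : Fin d ⊕ Fin d => μ)
      ((Measure.pi fun _ : Fin d => μ).prod (Measure.pi fun _ : Fin d => μ)) := by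
    have h := measurePreserving_sumPiEquivProdPi_symm (fun _ : Fin d ⊕ Fin d => μ)
    have h2 := h.symm _
    rwa [MeasurableEquiv.symm_symm] at h2
  have hmp : MeasurePreserving e (Measure.pi fun _ : Fin (d + d) => μ)
      ((Measure.pi fun _ : Fin d => μ).prod (Measure.pi fun _ : Fin d => μ)) := hmp2.comp hmp1
  -- explicit formula for e
  have he1_apply : ∀ (x : Fin (d + d) → X) (i' : Fin d ⊕ Fin d),
      e1 x i' = x (finSumFinEquiv i') := by
    intro x i'
    have hz : MeasurableEquiv.piCongrLeft (fun _ : Fin (d + d) => X) finSumFinEquiv (e1 x) = x :=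
      (MeasurableEquiv.piCongrLeft (fun _ : Fin (d + d) => X) finSumFinEquiv).apply_symm_apply x
    have h := MeasurableEquiv.piCongrLeft_apply_apply (β := fun _ : Fin (d + d) => X)
      finSumFinEquiv (e1 x) i'
    rw [hz] at h
    exact h.symm
  have he_apply : ∀ x : Fin (d + d) → X,
      e x = (fun i => x (finSumFinEquiv (Sum.inl i)), fun i => x (finSumFinEquiv (Sum.inr i))) := by
    intro x
    have h0 : e x = (fun i => e1 x (Sum.inl i), fun i => e1 x (Sum.inr i)) := rfl
    rw [h0]
    simp only [Prod.mk.injEq]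
    exact ⟨funext fun i => he1_apply x _, funext fun i => he1_apply x _⟩
  have hcomm : Prod.map (fun (x : Fin d → X) i => T (x i)) (fun (x : Fin d → X) i => T (x i))
      = ⇑e ∘ (fun (x : Fin (d + d) → X) i => T (x i)) ∘ ⇑e.symm := by
    funext y
    have h1 : e (e.symm y) = y := e.apply_symm_apply y
    have hx := he_apply (e.symm y)
    rw [e.apply_symm_apply] at hx
    show Prod.map _ _ y = e ((fun x i => T (x i)) (e.symm y))
    rw [he_apply]
    conv_lhs => rw [hx]
    rfl
  rw [hcomm]
  exact (MeasureTheory.MeasurePreserving.ergodic_conjugate_iff hmp).2 hbig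

end PiLemmas

end Auxiliary

/-- Let `(X, 𝒳, μ, T)` be a weakly mixing PID invertible measure-preserving transformation of a
probability space. Then for every integer `n ≠ 0`, the system `(X, 𝒳, μ, Tⁿ)` is also PID. -/
theorem pid_zpow {X : Type*} [MeasurableSpace X] (μ : Measure X) [IsProbabilityMeasure μ]
    (T : Equiv.Perm X)
    (hT : MeasurePreserving T μ μ) (hT' : MeasurePreserving T.symm μ μ)
    (hwm : Ergodic (Prod.map ⇑T ⇑T) (μ.prod μ)) (hpid : IsPID μ ⇑T)
    (n : ℤ) (hn : n ≠ 0) :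
    IsPID μ ⇑(T ^ n) := by
  intro d hd lam hlprob hlinv hlmarg hlpair
  classical
  haveI := hlprob
  set m : ℕ := n.natAbs with hm_def
  have hm : m ≠ 0 := Int.natAbs_ne_zero.2 hn
  set π : Measure (Fin d → X) := Measure.pi fun _ => μ with hπ_def
  set Td : (Fin d → X) → (Fin d → X) := fun x i => T (x i) with hTd_def
  have hTd : MeasurePreserving Td π π := measurePreserving_pi _ _ (fun _ => hT)
  have hTdmeas : Measurable Td := hTd.measurable
  have hTd_iter : ∀ k : ℕ, (Td^[k]) = fun (x : Fin d → X) i => (⇑T)^[k] (x i) := by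
    intro k
    induction k with
    | zero => funext x; simp
    | succ p ih =>
      funext x i
      rw [Function.iterate_succ_apply', ih]
      simp only [hTd_def]
      rw [Function.iterate_succ_apply']
  -- `lam` is invariant under `Td^[m]`
  have hinvm : Measure.map (Td^[m]) lam = lam := by
    rw [hTd_iter m]
    rcases Int.natAbs_eq n with hcase | hcase
    · have hfun : (fun (x : Fin d → X) i => (⇑T)^[m] (x i))
          = fun (x : Fin d → X) i => (T ^ n) (x i) := by
        funext x i
        rw [hcase, zpow_natCast, Equiv.Perm.coe_pow]
      rw [hfun]; exact hlinv
    · have hTn : T ^ n = (T ^ m : Equiv.Perm X)⁻¹ := by rw [hcase, zpow_neg, zpow_natCast]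
      have hΨmeas : Measurable ⇑(T ^ n) := by
        rw [hTn, ← inv_pow, Equiv.Perm.coe_pow, Equiv.Perm.inv_def]
        exact (hT'.iterate m).measurable
      have hΨpimeas : Measurable (fun (x : Fin d → X) i => (T ^ n) (x i)) :=
        measurable_pi_iff.2 fun i => hΨmeas.comp (measurable_pi_apply i)
      have hΦmeas : Measurable (fun (x : Fin d → X) i => (⇑T)^[m] (x i)) :=
        measurable_pi_iff.2 fun i => (hT.iterate m).measurable.comp (measurable_pi_apply i)
      have hcomp : (fun (x : Fin d → X) i => (⇑T)^[m] (x i))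
          ∘ (fun (x : Fin d → X) i => (T ^ n) (x i)) = id := by
        funext x
        funext i
        show (⇑T)^[m] ((T ^ n) (x i)) = x i
        rw [← Equiv.Perm.coe_pow, hTn]
        exact Equiv.apply_symm_apply _ _
      calc Measure.map (fun (x : Fin d → X) i => (⇑T)^[m] (x i)) lam
          = Measure.map (fun (x : Fin d → X) i => (⇑T)^[m] (x i))
            (Measure.map (fun (x : Fin d → X) i => (T ^ n) (x i)) lam) := by rw [hlinv]
        _ = Measure.map ((fun (x : Fin d → X) i => (⇑T)^[m] (x i))
            ∘ (fun (x : Fin d → X) i => (T ^ n) (x i))) lam :=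
              Measure.map_map hΦmeas hΨpimeas
        _ = lam := by rw [hcomp, Measure.map_id]
  -- the averaged measure
  set lam' : Measure (Fin d → X) :=
    (m : ℝ≥0∞)⁻¹ • ∑ k ∈ Finset.range m, Measure.map (Td^[k]) lam with hlam'_def
  have hmeas_iter : ∀ k : ℕ, Measurable (Td^[k]) := fun k => (hTd.iterate k).measurable
  have hlam'_apply : ∀ A : Set (Fin d → X), MeasurableSet A →
      lam' A = (m : ℝ≥0∞)⁻¹ * ∑ k ∈ Finset.range m, lam ((Td^[k]) ⁻¹' A) := by
    intro A hA
    rw [hlam'_def, Measure.smul_apply, smul_eq_mul]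
    congr 1
    rw [Measure.finset_sum_apply]
    exact Finset.sum_congr rfl fun k _ => Measure.map_apply (hmeas_iter k) hA
  have hsum_inv : (m : ℝ≥0∞)⁻¹ * (m : ℝ≥0∞) = 1 :=
    ENNReal.inv_mul_cancel (by exact_mod_cast hm) (ENNReal.natCast_ne_top m)
  have hlam'_prob : IsProbabilityMeasure lam' := by
    constructor
    rw [hlam'_apply Set.univ MeasurableSet.univ]
    simp only [Set.preimage_univ]
    rw [Finset.sum_const, Finset.card_range, nsmul_eq_mul, measure_univ, mul_one, hsum_inv]
  have hlam'_inv : Measure.map Td lam' = lam' := by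
    ext A hA
    rw [Measure.map_apply hTdmeas hA, hlam'_apply _ (hTdmeas hA), hlam'_apply A hA]
    congr 1
    set u : ℕ → ℝ≥0∞ := fun k => lam ((Td^[k]) ⁻¹' A) with hu_def
    have hshift : ∀ k : ℕ, lam ((Td^[k]) ⁻¹' (Td ⁻¹' A)) = u (k + 1) := by
      intro k
      rw [hu_def]
      congr 1
      rw [← Set.preimage_comp, ← Function.iterate_succ']
    rw [Finset.sum_congr rfl fun k _ => hshift k]
    have hum : u m = u 0 := by
      rw [hu_def]
      simp only [Function.iterate_zero, Set.preimage_id]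
      rw [← Measure.map_apply (hmeas_iter m) hA, hinvm]
    have h2 := Finset.sum_range_succ' u m
    have h3 := Finset.sum_range_succ u m
    have h4 := h2.symm.trans h3
    rw [hum] at h4
    exact WithTop.add_right_cancel (measure_ne_top lam _) h4
  have hlam'_marg : ∀ i : Fin d, Measure.map (fun x => x i) lam' = μ := by
    intro i
    have hmeas : Measurable (fun x : Fin d → X => x i) := measurable_pi_apply i
    have hk : ∀ k : ℕ, Measure.map (fun x : Fin d → X => x i) (Measure.map (Td^[k]) lam) = μ := by
      intro k
      rw [Measure.map_map hmeas (hmeas_iter k)]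
      have hcomm : ((fun x : Fin d → X => x i) ∘ (Td^[k]))
          = (⇑T)^[k] ∘ (fun x : Fin d → X => x i) := by
        funext x
        show (Td^[k]) x i = (⇑T)^[k] (x i)
        rw [hTd_iter k]
      rw [hcomm, ← Measure.map_map ((hT.iterate k).measurable) hmeas, hlmarg i,
        (hT.iterate k).map_eq]
    ext A hA
    rw [Measure.map_apply hmeas hA, hlam'_apply _ (hmeas hA)]
    have hterm : ∀ k : ℕ, lam ((Td^[k]) ⁻¹' ((fun x : Fin d → X => x i) ⁻¹' A)) = μ A := by
      intro k
      rw [← Measure.map_apply (hmeas_iter k) (hmeas hA), ← Measure.map_apply hmeas hA, hk k]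
    rw [Finset.sum_congr rfl fun k _ => hterm k, Finset.sum_const, Finset.card_range,
      nsmul_eq_mul, ← mul_assoc, hsum_inv, one_mul]
  have hlam'_pair : ∀ i j : Fin d, i ≠ j →
      Measure.map (fun x => (x i, x j)) lam' = μ.prod μ := by
    intro i j hij
    have hmeas : Measurable (fun x : Fin d → X => (x i, x j)) :=
      (measurable_pi_apply i).prodMk (measurable_pi_apply j)
    have hTT : MeasurePreserving (Prod.map ⇑T ⇑T) (μ.prod μ) (μ.prod μ) := hT.prod hT
    have hk : ∀ k : ℕ, Measure.map (fun x : Fin d → X => (x i, x j))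
        (Measure.map (Td^[k]) lam) = μ.prod μ := by
      intro k
      rw [Measure.map_map hmeas (hmeas_iter k)]
      have hcomm : ((fun x : Fin d → X => (x i, x j)) ∘ (Td^[k]))
          = (Prod.map ⇑T ⇑T)^[k] ∘ (fun x : Fin d → X => (x i, x j)) := by
        funext x
        show ((Td^[k]) x i, (Td^[k]) x j) = (Prod.map ⇑T ⇑T)^[k] (x i, x j)
        rw [hTd_iter k, Prod.map_iterate]
        rfl
      rw [hcomm, ← Measure.map_map ((hTT.iterate k).measurable) hmeas, hlpair i j hij,
        (hTT.iterate k).map_eq]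
    ext A hA
    rw [Measure.map_apply hmeas hA, hlam'_apply _ (hmeas hA)]
    have hterm : ∀ k : ℕ,
        lam ((Td^[k]) ⁻¹' ((fun x : Fin d → X => (x i, x j)) ⁻¹' A)) = (μ.prod μ) A := by
      intro k
      rw [← Measure.map_apply (hmeas_iter k) (hmeas hA), ← Measure.map_apply hmeas hA, hk k]
    rw [Finset.sum_congr rfl fun k _ => hterm k, Finset.sum_const, Finset.card_range,
      nsmul_eq_mul, ← mul_assoc, hsum_inv, one_mul]
  have hlam'_pi : lam' = π := hpid d hd lam' hlam'_prob hlam'_inv hlam'_marg hlam'_pair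
  have hac : lam ≪ π := by
    refine Measure.AbsolutelyContinuous.mk fun A hA h0 => ?_
    have h1 : lam' A = 0 := by rw [hlam'_pi]; exact h0
    rw [hlam'_apply A hA] at h1
    rcases mul_eq_zero.1 h1 with h | h
    · exact absurd h (by simp [ENNReal.inv_eq_zero])
    · have h2 := (Finset.sum_eq_zero_iff.1 h) 0 (Finset.mem_range.2 (Nat.pos_of_ne_zero hm))
      simpa using h2
  have hErgProd := ergodic_prod_pi_of_pid μ T hT hT' hwm hpid d hd
  have hErgIter : Ergodic (Td^[m]) π := ergodic_iterate hTd hErgProd m hm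
  have hembTd : MeasurableEmbedding Td := by
    let e : (Fin d → X) ≃ᵐ (Fin d → X) :=
      ⟨Equiv.piCongrRight fun _ => T,
        measurable_pi_iff.2 fun i => hT.measurable.comp (measurable_pi_apply i),
        measurable_pi_iff.2 fun i => hT'.measurable.comp (measurable_pi_apply i)⟩
    exact (rfl : Td = ⇑e) ▸ e.measurableEmbedding
  exact absCont_inv_eq (mEmb_iterate hembTd m) hErgIter hinvm hac
end

section
/- Let (X, T) be a topological dynamical system on a compact metric space that is uniquely ergodic with unique invariant measure μ, and suppose (X, 𝒳, μ, T) is weakly mixing. Then for every n ∈ ℕ, the system (X, Tⁿ) is also uniquely ergodic (with the same unique invariant measure μ). -/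
open MeasureTheory Filter
open scoped Classical ENNReal

section Aux
open Set Function

namespace UEIterAux

variable {X : Type*} [MeasurableSpace X] {T : X → X} {μ : Measure X}

/-- From ergodicity of `T × T` we get pre-ergodicity of `T`. -/
lemma preErgodic_of_prodMap [IsProbabilityMeasure μ]
    (hwm : Ergodic (Prod.map T T) (μ.prod μ)) : PreErgodic T μ := by
  constructor
  intro s hs hinv
  have h2 : (Prod.map T T) ⁻¹' (s ×ˢ Set.univ) = s ×ˢ Set.univ := by
    ext ⟨x, y⟩
    simp only [Set.mem_preimage, Prod.map_apply, Set.mem_prod, Set.mem_univ, and_true]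
    exact Set.ext_iff.mp hinv x
  have h3 := hwm.toPreErgodic.prob_eq_zero_or_one
    (hs.prod MeasurableSet.univ) h2
  rw [Measure.prod_prod, measure_univ, mul_one] at h3
  rw [eventuallyConst_set']
  rcases h3 with h | h
  · exact Or.inl (ae_eq_empty.mpr h)
  · exact Or.inr (ae_eq_univ.mpr ((prob_compl_eq_zero_iff hs).mpr h))

/-- Candidate eigenfunction associated to a `T^[n]`-invariant set. -/
noncomputable def g (T : X → X) (s : Set X) (n : ℕ) (ω : ℂ) (x : X) : ℂ :=
  ∑ j ∈ Finset.range n, ω ^ j * (if T^[j] x ∈ s then 1 else 0)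

lemma measurable_g (hT : Measurable T) {s : Set X} (hs : MeasurableSet s) (n : ℕ) (ω : ℂ) :
    Measurable (g T s n ω) := by
  refine Finset.measurable_sum _ fun j _ => Measurable.const_mul ?_ _
  exact Measurable.ite (hT.iterate j hs) measurable_const measurable_const

lemma step {s : Set X} {n : ℕ} (hinv : T^[n] ⁻¹' s = s) {ω : ℂ} (hω : ω ^ n = 1) (x : X) :
    ω * g T s n ω (T x) = g T s n ω x := by
  have hmem : (T^[n] x ∈ s) = (T^[0] x ∈ s) := by
    simp only [iterate_zero_apply]
    rw [← Set.mem_preimage, hinv]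
  have hb : ω ^ n * (if T^[n] x ∈ s then (1 : ℂ) else 0)
      = ω ^ 0 * (if T^[0] x ∈ s then (1 : ℂ) else 0) := by
    simp only [hω, pow_zero, hmem]
  calc ω * g T s n ω (T x)
      = ∑ j ∈ Finset.range n,
          ω ^ (j + 1) * (if T^[j + 1] x ∈ s then (1 : ℂ) else 0) := by
        simp only [g, Finset.mul_sum]
        refine Finset.sum_congr rfl fun j _ => ?_
        rw [← iterate_succ_apply, pow_succ]
        ring
    _ = ∑ j ∈ Finset.range n, ω ^ j * (if T^[j] x ∈ s then (1 : ℂ) else 0) := by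
        have h1 := Finset.sum_range_succ'
          (fun j => ω ^ j * (if T^[j] x ∈ s then (1 : ℂ) else 0)) n
        have h2 := Finset.sum_range_succ
          (fun j => ω ^ j * (if T^[j] x ∈ s then (1 : ℂ) else 0)) n
        rw [h2, hb] at h1
        exact (add_right_cancel h1.symm)
    _ = g T s n ω x := rfl

variable [IsProbabilityMeasure μ]

/-- If `T × T` is ergodic and `ω ≠ 1` is an `n`-th root of unity, the eigenfunction vanishes. -/
lemma g_ae_zero (hT : Measurable T) (hme : MeasurePreserving T μ μ)
    (hwm : Ergodic (Prod.map T T) (μ.prod μ))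
    {s : Set X} (hs : MeasurableSet s) {n : ℕ} (hn : n ≠ 0)
    (hinv : T^[n] ⁻¹' s = s) {ω : ℂ} (hω : ω ^ n = 1) (hω1 : ω ≠ 1) :
    g T s n ω =ᵐ[μ] 0 := by
  have hω0 : ω ≠ 0 := by
    intro h
    rw [h, zero_pow hn] at hω
    exact zero_ne_one hω
  have hgT : ∀ x, g T s n ω (T x) = ω⁻¹ * g T s n ω x := by
    intro x
    rw [← step hinv hω x, inv_mul_cancel_left₀ hω0]
  have hnorm : ‖ω‖ = 1 := Complex.norm_eq_one_of_pow_eq_one hω hn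
  have hstarω : star ω = ω⁻¹ := by
    rw [show star ω = (starRingEnd ℂ) ω from rfl, ← Complex.inv_eq_conj hnorm]
  set G := g T s n ω with hG
  set h : X × X → ℂ := fun p => G p.1 * star (G p.2) with hh
  have hmg : Measurable G := measurable_g hT hs n ω
  have hstarm : Measurable (fun z : ℂ => star z) := continuous_star.measurable
  have hmh : AEStronglyMeasurable h (μ.prod μ) :=
    ((hmg.comp measurable_fst).mul
      (hstarm.comp (hmg.comp measurable_snd))).aestronglyMeasurable
  have hcomp : h ∘ Prod.map T T = h := by
    funext p
    simp only [hh, comp_apply, Prod.map_fst, Prod.map_snd, Prod.map_apply]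
    rw [hgT, hgT, star_mul', star_inv₀, hstarω, inv_inv]
    field_simp
  obtain ⟨c, hc⟩ := hwm.ae_eq_const_of_ae_eq_comp_ae hmh (by rw [hcomp])
  by_contra hg0
  have hg0' : ∃ᵐ x ∂μ, G x ≠ 0 := by
    rw [← Filter.not_eventually]
    exact hg0
  have hfub : ∀ᵐ x ∂μ, ∀ᵐ y ∂μ, G x * star (G y) = c :=
    Measure.ae_ae_of_ae_prod hc
  obtain ⟨x₀, hx₀, hx⟩ := (hg0'.and_eventually hfub).exists
  set α : ℂ := star (c / G x₀) with hα
  have hgα : G =ᵐ[μ] fun _ => α := by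
    filter_upwards [hx] with y hy
    have h1 : star (G y) = c / G x₀ := by
      rw [eq_div_iff hx₀, mul_comm]
      exact hy
    calc G y = star (star (G y)) := (star_star _).symm
      _ = α := by rw [h1]
  have hgTα : (G ∘ T) =ᵐ[μ] fun _ => α :=
    hgα.comp_tendsto hme.quasiMeasurePreserving.tendsto_ae
  have hne : (ae μ).NeBot := ae_neBot.mpr (IsProbabilityMeasure.ne_zero μ)
  obtain ⟨x₁, h1, h2⟩ := (hgα.and hgTα).exists
  replace h1 : G x₁ = α := h1
  replace h2 : G (T x₁) = α := h2
  have h3 : ω * α = α := by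
    have hstep := step hinv hω x₁
    rw [← hG] at hstep
    linear_combination hstep + h1 - ω * h2
  have hα0 : α = 0 := by
    by_contra hα0
    exact hω1 (mul_right_cancel₀ hα0 (by rw [h3, one_mul]))
  refine hg0 (hgα.trans ?_)
  rw [hα0]
  rfl

/-- For `ω = 1` the eigenfunction is a.e. constant. -/
lemma g_ae_const (hT : Measurable T) (hme : MeasurePreserving T μ μ)
    (hwm : Ergodic (Prod.map T T) (μ.prod μ))
    {s : Set X} (hs : MeasurableSet s) {n : ℕ}
    (hinv : T^[n] ⁻¹' s = s) :
    ∃ c : ℂ, g T s n 1 =ᵐ[μ] fun _ => c := by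
  have hErgT : Ergodic T μ := ⟨hme, preErgodic_of_prodMap hwm⟩
  have hcomp : g T s n 1 ∘ T = g T s n 1 := by
    funext x
    have h := step hinv (one_pow n) x
    rw [one_mul] at h
    exact h
  exact hErgT.ae_eq_const_of_ae_eq_comp_ae
    (measurable_g hT hs n 1).aestronglyMeasurable (by rw [hcomp])

end UEIterAux

namespace UEIterAux2
open UEIterAux

variable {X : Type*} [MeasurableSpace X] {T : X → X} {μ : Measure X} [IsProbabilityMeasure μ]

lemma ergodic_iterate (hT : Measurable T) (hme : MeasurePreserving T μ μ)
    (hwm : Ergodic (Prod.map T T) (μ.prod μ)) {n : ℕ} (hn : 0 < n) :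
    Ergodic (T^[n]) μ := by
  refine ⟨hme.iterate n, ⟨fun s hs hinv => ?_⟩⟩
  set ζ : ℂ := Complex.exp (2 * Real.pi * Complex.I / n) with hζ
  have hprim : IsPrimitiveRoot ζ n := Complex.isPrimitiveRoot_exp n hn.ne'
  have hζn : ζ ^ n = 1 := hprim.pow_eq_one
  have hconsts : ∀ k : ℕ, ∃ cc : ℂ, k < n → g T s n (ζ ^ k) =ᵐ[μ] fun _ => cc := by
    intro k
    rcases Nat.eq_zero_or_pos k with hk0 | hkpos
    · obtain ⟨c, hc⟩ := g_ae_const hT hme hwm hs hinv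
      exact ⟨c, fun _ => by rw [hk0, pow_zero]; exact hc⟩
    · by_cases hk : k < n
      · refine ⟨0, fun _ => ?_⟩
        have hpow : (ζ ^ k) ^ n = 1 := by
          rw [← pow_mul, mul_comm, pow_mul, hζn, one_pow]
        exact g_ae_zero hT hme hwm hs hn.ne' hinv hpow
          (hprim.pow_ne_one_of_pos_of_lt hkpos.ne' hk)
      · exact ⟨0, fun hkk => absurd hkk hk⟩
  choose c hc using hconsts
  have hae : ∀ᵐ x ∂μ, ∀ k, k < n → g T s n (ζ ^ k) x = c k := by
    rw [MeasureTheory.ae_all_iff]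
    intro k
    by_cases hk : k < n
    · filter_upwards [hc k hk] with x hx
      exact fun _ => hx
    · exact Filter.Eventually.of_forall fun x hkk => absurd hkk hk
  have hkey : ∀ᵐ x ∂μ, (n : ℂ) * (if x ∈ s then 1 else 0) = ∑ k ∈ Finset.range n, c k := by
    filter_upwards [hae] with x hx
    have hsum : ∑ k ∈ Finset.range n, g T s n (ζ ^ k) x
        = (n : ℂ) * (if x ∈ s then 1 else 0) := by
      calc ∑ k ∈ Finset.range n, g T s n (ζ ^ k) x
          = ∑ j ∈ Finset.range n, (∑ k ∈ Finset.range n, (ζ ^ j) ^ k) *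
              (if T^[j] x ∈ s then (1:ℂ) else 0) := by
            simp only [g]
            rw [Finset.sum_comm]
            refine Finset.sum_congr rfl fun j _ => ?_
            rw [Finset.sum_mul]
            refine Finset.sum_congr rfl fun k _ => ?_
            rw [← pow_mul, ← pow_mul, mul_comm j k]
        _ = ∑ j ∈ Finset.range n, (if j = 0 then (n:ℂ) else 0) *
              (if T^[j] x ∈ s then (1:ℂ) else 0) := by
            refine Finset.sum_congr rfl fun j hj => ?_
            congr 1
            by_cases hj0 : j = 0
            · simp [hj0]
            · rw [if_neg hj0]
              have hne1 : ζ ^ j ≠ 1 := hprim.pow_ne_one_of_pos_of_lt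
                hj0 (Finset.mem_range.mp hj)
              rw [geom_sum_eq hne1]
              have hpj : (ζ ^ j) ^ n = 1 := by
                rw [← pow_mul, mul_comm, pow_mul, hζn, one_pow]
              rw [hpj, sub_self, zero_div]
        _ = (n : ℂ) * (if x ∈ s then 1 else 0) := by
            rw [Finset.sum_eq_single 0]
            · by_cases hxs : x ∈ s <;> simp [hxs]
            · intro j _ hj0
              rw [if_neg hj0, zero_mul]
            · intro h0
              exact absurd (Finset.mem_range.mpr hn) h0
    rw [← hsum]
    exact Finset.sum_congr rfl fun k hk => hx k (Finset.mem_range.mp hk)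
  rw [eventuallyConst_set']
  rcases eq_or_ne (μ s) 0 with h0 | h0
  · exact Or.inl (ae_eq_empty.mpr h0)
  · right
    set C := ∑ k ∈ Finset.range n, c k with hC
    have hnull : μ {x | ¬ ((n : ℂ) * (if x ∈ s then 1 else 0) = C)} = 0 := ae_iff.mp hkey
    have hCn : C = (n : ℂ) := by
      by_contra hCne
      apply h0
      refine measure_mono_null (fun x hxs => ?_) hnull
      simp only [Set.mem_setOf_eq]
      rw [if_pos hxs, mul_one]
      exact fun hcc => hCne hcc.symm
    rw [ae_eq_univ]
    refine measure_mono_null (fun x hxs => ?_) hnull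
    simp only [Set.mem_setOf_eq]
    rw [if_neg hxs, mul_zero, hCn]
    intro h00
    exact (Nat.cast_ne_zero.mpr hn.ne' : (n:ℂ) ≠ 0) h00.symm

end UEIterAux2

end Aux

/-- Let `(X, T)` be a topological dynamical system on a compact metric space, uniquely ergodic
with unique invariant Borel probability measure `μ`, and suppose `(X, μ, T)` is weakly mixing
(i.e. `T × T` is ergodic for `μ × μ`). Then for every `n ∈ ℕ` (with `n ≥ 1`), the system
`(X, Tⁿ)` is also uniquely ergodic, with the same unique invariant measure `μ`. -/
theorem uniquelyErgodic_iterate {X : Type*} [MetricSpace X] [CompactSpace X]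
    [MeasurableSpace X] [BorelSpace X]
    (T : X ≃ₜ X) (μ : Measure X) [IsProbabilityMeasure μ]
    (hTμ : Measure.map T μ = μ)
    (huniq : ∀ ν : Measure X, IsProbabilityMeasure ν → Measure.map T ν = ν → ν = μ)
    (hwm : Ergodic (Prod.map ⇑T ⇑T) (μ.prod μ))
    (n : ℕ) (hn : 0 < n) :
    Measure.map (⇑T)^[n] μ = μ ∧
      ∀ ν : Measure X, IsProbabilityMeasure ν → Measure.map (⇑T)^[n] ν = ν → ν = μ := by
  have hT : Measurable (⇑T) := T.measurable
  have hme : MeasurePreserving (⇑T) μ μ := ⟨hT, hTμ⟩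
  have hμn : Measure.map (⇑T)^[n] μ = μ := (hme.iterate n).map_eq
  refine ⟨hμn, fun ν hνp hν => ?_⟩
  -- the averaged measure
  set νbar : Measure X := (n : ℝ≥0∞)⁻¹ • ∑ j ∈ Finset.range n, Measure.map (⇑T)^[j] ν
    with hνbar
  have hmapj : ∀ j : ℕ, (Measure.map ((⇑T)^[j]) ν) Set.univ = 1 := by
    intro j
    rw [Measure.map_apply (hT.iterate j) MeasurableSet.univ, Set.preimage_univ, measure_univ]
  have hνbar_prob : IsProbabilityMeasure νbar := by
    constructor
    rw [hνbar, Measure.smul_apply, Measure.finset_sum_apply, smul_eq_mul]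
    rw [Finset.sum_congr rfl fun j _ => hmapj j, Finset.sum_const, Finset.card_range,
      nsmul_eq_mul, mul_one]
    exact ENNReal.inv_mul_cancel (by exact_mod_cast hn.ne') (ENNReal.natCast_ne_top n)
  have hmapbar : Measure.map (⇑T) νbar = νbar := by
    have hsum : Measure.map (⇑T) (∑ j ∈ Finset.range n, Measure.map (⇑T)^[j] ν)
        = ∑ j ∈ Finset.range n, Measure.map (⇑T) (Measure.map (⇑T)^[j] ν) := by
      ext u hu
      rw [Measure.map_apply hT hu, Measure.finset_sum_apply, Measure.finset_sum_apply]
      exact Finset.sum_congr rfl fun j _ =>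
        (Measure.map_apply hT hu).symm
    rw [hνbar, Measure.map_smul, hsum]
    congr 1
    have hstepj : ∀ j : ℕ, Measure.map (⇑T) (Measure.map (⇑T)^[j] ν)
        = Measure.map (⇑T)^[j + 1] ν := by
      intro j
      rw [Measure.map_map hT (hT.iterate j)]
      congr 1
      funext x
      exact (Function.iterate_succ_apply' (⇑T) j x).symm
    ext u hu
    rw [Measure.finset_sum_apply, Measure.finset_sum_apply]
    have ha : ∀ j ∈ Finset.range n,
        Measure.map (⇑T) (Measure.map (⇑T)^[j] ν) u = Measure.map (⇑T)^[j+1] ν u := by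
      intro j _
      rw [hstepj j]
    rw [Finset.sum_congr rfl ha]
    set a : ℕ → ℝ≥0∞ := fun j => Measure.map ((⇑T)^[j]) ν u with hadef
    have han : a n = a 0 := by
      simp only [hadef]
      rw [hν, Function.iterate_zero]
      rw [Measure.map_id]
    have h1 := Finset.sum_range_succ' a n
    have h2 := Finset.sum_range_succ a n
    rw [h2, han] at h1
    have hfin : a 0 ≠ ⊤ := by
      simp only [hadef, Function.iterate_zero, Measure.map_id]
      exact measure_ne_top ν u
    exact (ENNReal.add_left_inj hfin).mp h1.symm
  have hbar_eq : νbar = μ := huniq νbar hνbar_prob hmapbar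
  -- absolute continuity
  have hac : ν ≪ μ := by
    refine Measure.AbsolutelyContinuous.mk fun u hu hu0 => ?_
    have : νbar u = 0 := by rw [hbar_eq]; exact hu0
    rw [hνbar, Measure.smul_apply, smul_eq_mul] at this
    rcases mul_eq_zero.mp this with h | h
    · exact absurd h (ENNReal.inv_ne_zero.mpr (ENNReal.natCast_ne_top n))
    · rw [Measure.finset_sum_apply] at h
      have h0 := (Finset.sum_eq_zero_iff.mp h) 0 (Finset.mem_range.mpr hn)
      rwa [Function.iterate_zero, Measure.map_id] at h0
  -- measurable embedding of the iterate
  have hemb : MeasurableEmbedding ((⇑T)^[n]) := by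
    have hEx : ∀ m : ℕ, ∃ E : X ≃ᵐ X, ⇑E = (⇑T)^[m] := by
      intro m
      induction m with
      | zero => exact ⟨MeasurableEquiv.refl X, rfl⟩
      | succ m ih =>
        obtain ⟨E, hE⟩ := ih
        refine ⟨E.trans T.toMeasurableEquiv, ?_⟩
        funext x
        simp only [MeasurableEquiv.trans_apply, hE]
        rw [Function.iterate_succ_apply']
        rfl
    obtain ⟨E, hE⟩ := hEx n
    exact hE ▸ E.measurableEmbedding
  -- the density is invariant
  have hinv : (fun x => ν.rnDeriv μ ((⇑T)^[n] x)) =ᵐ[μ] ν.rnDeriv μ := by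
    have h := hemb.rnDeriv_map ν μ
    rwa [hν, hμn] at h
  have hErg : Ergodic ((⇑T)^[n]) μ := UEIterAux2.ergodic_iterate hT hme hwm hn
  obtain ⟨cc, hcc⟩ := hErg.ae_eq_const_of_ae_eq_comp₀
    (Measure.measurable_rnDeriv ν μ).nullMeasurable hinv
  have hνd : ν = μ.withDensity (ν.rnDeriv μ) := (Measure.withDensity_rnDeriv_eq ν μ hac).symm
  have hνc : ν = cc • μ := by
    rw [hνd, withDensity_congr_ae hcc]
    exact withDensity_const cc
  have hcc1 : cc = 1 := by
    have h1 : ν Set.univ = 1 := measure_univ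
    rw [hνc, Measure.smul_apply, measure_univ, smul_eq_mul, mul_one] at h1
    exact h1
  rw [hνc, hcc1, one_smul]
end

section
/- Let (X, 𝒳, μ, T) be a weakly mixing invertible measure-preserving transformation such that the topological system (X, T) on a compact metric space is uniquely ergodic with unique invariant measure μ, let d ∈ ℕ, and set σ_d = T × T² × ⋯ × T^d on X^d. For any x ∈ X, every weak* limit point λ of the sequence of empirical measures (1/N) ∑_{n=0}^{N−1} σ_dⁿ δ_{(x,…,x)} is a joining of the systems (X, 𝒳, μ, T), (X, 𝒳, μ, T²), …, (X, 𝒳, μ, T^d); that is, λ is invariant under σ_d and its marginal on each coordinate equals μ. -/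
open MeasureTheory Filter
open scoped NNReal ENNReal


lemma my_ext_of_forall_integral_eq {Y : Type*} [TopologicalSpace Y] [MeasurableSpace Y]
    [BorelSpace Y] [HasOuterApproxClosed Y] {μ ν : Measure Y}
    [IsFiniteMeasure μ] [IsFiniteMeasure ν]
    (h : ∀ f : C(Y, ℝ), ∫ y, f y ∂μ = ∫ y, f y ∂ν) : μ = ν := by
  apply ext_of_forall_lintegral_eq_of_IsFiniteMeasure
  intro f
  have hfc : Continuous fun y => ((f y : ℝ≥0) : ℝ) :=
    NNReal.continuous_coe.comp f.continuous
  have h' := h ⟨fun y => ((f y : ℝ≥0) : ℝ), hfc⟩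
  simp only [ContinuousMap.coe_mk] at h'
  have h1 := BoundedContinuousFunction.toReal_lintegral_coe_eq_integral f μ
  have h2 := BoundedContinuousFunction.toReal_lintegral_coe_eq_integral f ν
  have hfin : ∀ (ρ : Measure Y) [IsFiniteMeasure ρ], ∫⁻ x, (f x : ℝ≥0∞) ∂ρ ≠ ⊤ := fun ρ _ =>
    ne_of_lt (BoundedContinuousFunction.lintegral_lt_top_of_nnreal ρ f)
  have := h1.trans (h'.trans h2.symm)
  exact (ENNReal.toReal_eq_toReal_iff' (hfin μ) (hfin ν)).mp this

lemma my_eq_of_ergodic_ac {Y : Type*} [MeasurableSpace Y] {S : Y → Y}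
    (hemb : MeasurableEmbedding S) {μ θ : Measure Y}
    [IsProbabilityMeasure μ] [IsProbabilityMeasure θ]
    (hS : Ergodic S μ) (hθS : Measure.map S θ = θ) (hac : θ ≪ μ) : θ = μ := by
  have hμS : Measure.map S μ = μ := hS.toMeasurePreserving.map_eq
  have h1 : (fun x => (Measure.map S θ).rnDeriv (Measure.map S μ) (S x)) =ᵐ[μ] θ.rnDeriv μ :=
    hemb.rnDeriv_map θ μ
  rw [hθS, hμS] at h1
  obtain ⟨c, hc⟩ := hS.ae_eq_const_of_ae_eq_comp₀
    (Measure.measurable_rnDeriv θ μ).nullMeasurable h1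
  have hθ : θ = c • μ := by
    rw [← Measure.withDensity_rnDeriv_eq θ μ hac, withDensity_congr_ae hc]
    exact withDensity_const c
  have hc1 : c = 1 := by
    have huniv := congrArg (fun ρ : Measure Y => ρ Set.univ) hθ
    simp only [Measure.smul_apply, smul_eq_mul, measure_univ, mul_one] at huniv
    exact huniv.symm
  rw [hθ, hc1, one_smul]

lemma my_map_finset_sum {Y Z : Type*} [MeasurableSpace Y] [MeasurableSpace Z]
    {f : Y → Z} (hf : Measurable f) (s : Finset ℕ) (ρ : ℕ → Measure Y) :
    Measure.map f (∑ j ∈ s, ρ j) = ∑ j ∈ s, Measure.map f (ρ j) := by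
  classical
  induction s using Finset.induction_on with
  | empty => simp
  | insert _ _ hj ih =>
      rw [Finset.sum_insert hj, Finset.sum_insert hj, Measure.map_add _ _ hf, ih]

lemma my_measure_add_cancel {Y : Type*} [MeasurableSpace Y] {a b c : Measure Y}
    [IsFiniteMeasure c] (h : a + c = b + c) : a = b := by
  ext s hs
  have := congrArg (fun ρ : Measure Y => ρ s) h
  simp only [Measure.add_apply] at this
  exact (ENNReal.add_left_inj (measure_ne_top c s)).mp this

lemma my_sum_shift {Y : Type*} [MeasurableSpace Y] (g : ℕ → Measure Y)
    [∀ j, IsFiniteMeasure (g j)] (m : ℕ) (hcyc : g m = g 0) :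
    ∑ j ∈ Finset.range m, g (j + 1) = ∑ j ∈ Finset.range m, g j := by
  have h1 := Finset.sum_range_succ' g m
  have h2 := Finset.sum_range_succ g m
  rw [hcyc] at h2
  refine my_measure_add_cancel (c := g 0) ?_
  rw [← h1, h2]

lemma my_pow_invariant_eq {X : Type*} [MetricSpace X] [CompactSpace X]
    [MeasurableSpace X] [BorelSpace X]
    (T : X ≃ₜ X) (μ : Measure X) [IsProbabilityMeasure μ]
    (huniq : ∀ ν : Measure X, IsProbabilityMeasure ν → Measure.map T ν = ν → ν = μ)
    (hwm : Ergodic (Prod.map ⇑T ⇑T) (μ.prod μ))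
    (m : ℕ) (hm : 0 < m)
    (ν : Measure X) [IsProbabilityMeasure ν]
    (hν : Measure.map (⇑T)^[m] ν = ν) : ν = μ := by
  have hTmeas : Measurable ⇑T := T.continuous.measurable
  have hitmeas : ∀ j : ℕ, Measurable ((⇑T)^[j]) := fun j => hTmeas.iterate j
  set νj : ℕ → Measure X := fun j => Measure.map ((⇑T)^[j]) ν with hνjdef
  have hν0 : νj 0 = ν := by simp [hνjdef]
  haveI hprob : ∀ j, IsProbabilityMeasure (νj j) :=
    fun j => Measure.isProbabilityMeasure_map (hitmeas j).aemeasurable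
  have hsucc : ∀ j, Measure.map ⇑T (νj j) = νj (j + 1) := by
    intro j
    rw [hνjdef]
    simp only
    rw [Measure.map_map hTmeas (hitmeas j), ← Function.iterate_succ']
  have hcyc : νj m = νj 0 := by rw [hν0]; exact hν
  -- the averaged measure equals μ
  set μ' : Measure X := (m : ℝ≥0∞)⁻¹ • ∑ j ∈ Finset.range m, νj j with hμ'def
  have hmne : (m : ℝ≥0∞) ≠ 0 := by exact_mod_cast Nat.pos_iff_ne_zero.mp hm
  have hmnetop : (m : ℝ≥0∞) ≠ ⊤ := ENNReal.natCast_ne_top m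
  haveI hμ'prob : IsProbabilityMeasure μ' := by
    constructor
    rw [hμ'def, Measure.smul_apply, Measure.finset_sum_apply]
    simp only [measure_univ, Finset.sum_const, Finset.card_range, nsmul_eq_mul, mul_one,
      smul_eq_mul]
    exact ENNReal.inv_mul_cancel hmne hmnetop
  have hμ' : μ' = μ := by
    refine huniq μ' hμ'prob ?_
    rw [hμ'def, Measure.map_smul, my_map_finset_sum hTmeas]
    congr 1
    simp only [hsucc]
    exact my_sum_shift νj m hcyc
  -- absolute continuity of each νj
  have hacj : ∀ j ∈ Finset.range m, νj j ≪ μ := by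
    intro j hj
    refine Measure.AbsolutelyContinuous.mk fun s hs h0 => ?_
    have h1 : μ' s = 0 := by rw [hμ']; exact h0
    rw [hμ'def, Measure.smul_apply, smul_eq_mul] at h1
    have h2 : (∑ k ∈ Finset.range m, νj k) s = 0 := by
      rcases mul_eq_zero.mp h1 with h | h
      · exact absurd h (ENNReal.inv_ne_zero.mpr hmnetop)
      · exact h
    rw [Measure.finset_sum_apply] at h2
    exact (Finset.sum_eq_zero_iff.mp h2) j hj
  -- the product measure
  set θ : Measure (X × X) :=
    (m : ℝ≥0∞)⁻¹ • ∑ j ∈ Finset.range m, (νj j).prod (νj j) with hθdef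
  haveI hθprob : IsProbabilityMeasure θ := by
    constructor
    rw [hθdef, Measure.smul_apply, Measure.finset_sum_apply]
    simp only [measure_univ, Finset.sum_const, Finset.card_range, nsmul_eq_mul, mul_one,
      smul_eq_mul]
    exact ENNReal.inv_mul_cancel hmne hmnetop
  have hθinv : Measure.map (Prod.map ⇑T ⇑T) θ = θ := by
    rw [hθdef, Measure.map_smul, my_map_finset_sum (hTmeas.prodMap hTmeas)]
    congr 1
    have : ∀ j, Measure.map (Prod.map ⇑T ⇑T) ((νj j).prod (νj j))
        = (νj (j+1)).prod (νj (j+1)) := by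
      intro j
      rw [← Measure.map_prod_map _ _ hTmeas hTmeas, hsucc]
    simp only [this]
    exact my_sum_shift (fun j => (νj j).prod (νj j)) m (show (νj m).prod (νj m) = (νj 0).prod (νj 0) by rw [hcyc])
  have hθac : θ ≪ μ.prod μ := by
    refine Measure.AbsolutelyContinuous.mk fun s hs h0 => ?_
    rw [hθdef, Measure.smul_apply, Measure.finset_sum_apply, smul_eq_mul]
    have : ∀ j ∈ Finset.range m, ((νj j).prod (νj j)) s = 0 := fun j hj =>
      ((hacj j hj).prod (hacj j hj)) h0
    rw [Finset.sum_congr rfl this]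
    simp
  -- conclude θ = μ.prod μ using ergodicity
  have hemb : MeasurableEmbedding (Prod.map ⇑T ⇑T) :=
    ((T.prodCongr T).toMeasurableEquiv).measurableEmbedding
  have hθeq : θ = μ.prod μ := my_eq_of_ergodic_ac hemb hwm hθinv hθac
  -- compare integrals of continuous functions
  refine my_ext_of_forall_integral_eq fun g => ?_
  have hint : ∀ (ρ : Measure X) [IsFiniteMeasure ρ], Integrable (fun y => g y) ρ := by
    intro ρ _
    exact BoundedContinuousFunction.integrable ρ (BoundedContinuousFunction.mkOfCompact g)
  have hint2 : ∀ (ρ : Measure (X × X)) [IsFiniteMeasure ρ],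
      Integrable (fun p : X × X => g p.1 * g p.2) ρ := by
    intro ρ _
    have hc : Continuous fun p : X × X => g p.1 * g p.2 :=
      (g.continuous.comp continuous_fst).mul (g.continuous.comp continuous_snd)
    exact BoundedContinuousFunction.integrable ρ
      (BoundedContinuousFunction.mkOfCompact ⟨_, hc⟩)
  set a : ℕ → ℝ := fun j => ∫ y, g y ∂(νj j) with hadef
  set A : ℝ := ∫ y, g y ∂μ with hAdef
  have hmR : (m : ℝ) ≠ 0 := by exact_mod_cast Nat.pos_iff_ne_zero.mp hm
  have htoReal : ((m : ℝ≥0∞)⁻¹).toReal = (m : ℝ)⁻¹ := by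
    rw [ENNReal.toReal_inv]; norm_num
  have hS1 : ∑ j ∈ Finset.range m, a j = m * A := by
    have : A = (m : ℝ)⁻¹ * ∑ j ∈ Finset.range m, a j := by
      rw [hAdef, ← hμ', hμ'def, integral_smul_measure,
        integral_finset_sum_measure (fun j _ => hint (νj j)), htoReal, smul_eq_mul]
    rw [this]; field_simp
  have hS2 : ∑ j ∈ Finset.range m, (a j) ^ 2 = m * A ^ 2 := by
    have h1 : ∫ p : X × X, g p.1 * g p.2 ∂(μ.prod μ) = A ^ 2 := by
      rw [integral_prod_mul]; ring
    have h2 : ∫ p : X × X, g p.1 * g p.2 ∂θ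
        = (m : ℝ)⁻¹ * ∑ j ∈ Finset.range m, (a j) ^ 2 := by
      rw [hθdef, integral_smul_measure,
        integral_finset_sum_measure (fun j _ => hint2 ((νj j).prod (νj j))), htoReal,
        smul_eq_mul]
      congr 1
      refine Finset.sum_congr rfl fun j _ => ?_
      rw [integral_prod_mul]; ring
    rw [hθeq, h1] at h2
    field_simp at h2
    linarith
  have hzero : ∑ j ∈ Finset.range m, (a j - A) ^ 2 = 0 := by
    have hexp : ∑ j ∈ Finset.range m, (a j - A) ^ 2
        = (∑ j ∈ Finset.range m, (a j) ^ 2) - 2 * A * (∑ j ∈ Finset.range m, a j)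
          + m * A ^ 2 := by
      rw [Finset.mul_sum, ← Finset.sum_sub_distrib,
        show (m : ℝ) * A ^ 2 = ∑ _j ∈ Finset.range m, A ^ 2 by
          simp [Finset.sum_const, Finset.card_range],
        ← Finset.sum_add_distrib]
      exact Finset.sum_congr rfl fun j _ => by ring
    rw [hexp, hS1, hS2]; ring
  have h0mem : (0 : ℕ) ∈ Finset.range m := Finset.mem_range.mpr hm
  have := (Finset.sum_eq_zero_iff_of_nonneg (fun j _ => sq_nonneg (a j - A))).mp hzero 0 h0mem
  have ha0 : a 0 = A := by
    have := sq_eq_zero_iff.mp this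
    linarith
  calc ∫ y, g y ∂ν = a 0 := by rw [hadef]; simp only [hν0]
    _ = A := ha0


/-- Let `(X, 𝒳, μ, T)` be a weakly mixing invertible measure-preserving transformation with
`(X, T)` uniquely ergodic on a compact metric space, `d ∈ ℕ`, and `σ_d = T × T² × ⋯ × T^d` on
`X^d`. For any `x ∈ X`, every weak* limit point `lam` of the empirical measures
`(1/N) ∑_{n=0}^{N-1} σ_dⁿ δ_{(x,…,x)}` (i.e. a probability measure which is a limit along a
subsequence, tested against continuous functions) is a joining of the systems
`(X, μ, T), (X, μ, T²), …, (X, μ, T^d)`: it is `σ_d`-invariant and each of its one-dimensional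
marginals equals `μ`. -/
theorem weak_limit_point_is_joining {X : Type*} [MetricSpace X] [CompactSpace X]
    [MeasurableSpace X] [BorelSpace X]
    (T : X ≃ₜ X) (μ : Measure X) [IsProbabilityMeasure μ]
    (hT : MeasurePreserving ⇑T μ μ)
    (huniq : ∀ ν : Measure X, IsProbabilityMeasure ν → Measure.map T ν = ν → ν = μ)
    (hwm : Ergodic (Prod.map ⇑T ⇑T) (μ.prod μ))
    (d : ℕ) (x : X)
    (lam : Measure (Fin d → X)) [IsProbabilityMeasure lam]
    (hlim : ∃ φ : ℕ → ℕ, StrictMono φ ∧ ∀ f : C((Fin d → X), ℝ),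
      Tendsto
        (fun N : ℕ => (φ N : ℝ)⁻¹ *
          ∑ n ∈ Finset.range (φ N), f (fun i => (⇑T)^[(i.val + 1) * n] x))
        atTop (nhds (∫ y, f y ∂lam))) :
    Measure.map (fun y (i : Fin d) => (⇑T)^[i.val + 1] (y i)) lam = lam ∧
      ∀ i : Fin d, Measure.map (fun y => y i) lam = μ := by
  obtain ⟨φ, hφ, hconv⟩ := hlim
  set σ : (Fin d → X) → (Fin d → X) := fun y i => (⇑T)^[i.val + 1] (y i) with hσdef
  have hσc : Continuous σ :=
    continuous_pi fun i => (T.continuous.iterate (i.val + 1)).comp (continuous_apply i)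
  set u : ℕ → (Fin d → X) := fun n i => (⇑T)^[(i.val + 1) * n] x with hudef
  have hσu : ∀ n, σ (u n) = u (n + 1) := by
    intro n
    funext i
    simp only [hσdef, hudef]
    rw [← Function.iterate_add_apply]
    congr 1
    ring
  -- φ N tends to infinity
  have hφatTop : Tendsto (fun N => (φ N : ℝ)) atTop atTop :=
    tendsto_natCast_atTop_atTop.comp hφ.tendsto_atTop
  have hinv0 : Tendsto (fun N => (φ N : ℝ)⁻¹) atTop (nhds 0) :=
    hφatTop.inv_tendsto_atTop
  -- key invariance of integrals
  have key : ∀ f : C((Fin d → X), ℝ), ∫ y, f (σ y) ∂lam = ∫ y, f y ∂lam := by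
    intro f
    have h1 := hconv f
    have h2 := hconv (f.comp ⟨σ, hσc⟩)
    simp only [ContinuousMap.comp_apply, ContinuousMap.coe_mk] at h2
    have h2' : Tendsto
        (fun N : ℕ => (φ N : ℝ)⁻¹ * ∑ n ∈ Finset.range (φ N), f (u n)
          + (φ N : ℝ)⁻¹ * (f (u (φ N)) - f (u 0)))
        atTop (nhds (∫ y, f (σ y) ∂lam)) := by
      refine h2.congr fun N => ?_
      have htel : ∑ n ∈ Finset.range (φ N), f (σ (u n))
          = ∑ n ∈ Finset.range (φ N), f (u n) + (f (u (φ N)) - f (u 0)) := by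
        have e1 := Finset.sum_range_succ' (fun n => f (u n)) (φ N)
        have e2 := Finset.sum_range_succ (fun n => f (u n)) (φ N)
        simp only [hσu]
        linarith [e1, e2]
      rw [htel]
      ring
    -- the error term tends to zero
    have herr : Tendsto (fun N : ℕ => (φ N : ℝ)⁻¹ * (f (u (φ N)) - f (u 0)))
        atTop (nhds 0) := by
      obtain ⟨C, hC⟩ : ∃ C, ∀ y, |f y| ≤ C := by
        obtain ⟨C, hC⟩ := (BoundedContinuousFunction.mkOfCompact f).bounded
        exact ⟨C + |f (u 0)|, fun y => by
          have := hC y (u 0)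
          simp only [BoundedContinuousFunction.mkOfCompact_apply, Real.dist_eq] at this
          calc |f y| = |f y - f (u 0) + f (u 0)| := by ring_nf
            _ ≤ |f y - f (u 0)| + |f (u 0)| := abs_add_le _ _
            _ ≤ C + |f (u 0)| := by linarith⟩
      have hb : ∀ N, |(φ N : ℝ)⁻¹ * (f (u (φ N)) - f (u 0))| ≤ (φ N : ℝ)⁻¹ * (2 * C) := by
        intro N
        rw [abs_mul]
        have h0 : (0:ℝ) ≤ (φ N : ℝ)⁻¹ := by positivity
        rw [abs_of_nonneg h0]
        refine mul_le_mul_of_nonneg_left ?_ h0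
        calc |f (u (φ N)) - f (u 0)| ≤ |f (u (φ N))| + |f (u 0)| := abs_sub _ _
          _ ≤ 2 * C := by have := hC (u (φ N)); have := hC (u 0); linarith
      have hlim2 : Tendsto (fun N : ℕ => (φ N : ℝ)⁻¹ * (2 * C)) atTop (nhds 0) := by
        simpa using hinv0.mul_const (2 * C)
      exact squeeze_zero_norm (fun N => by rw [Real.norm_eq_abs]; exact hb N) hlim2
    have := (h1.add herr)
    rw [add_zero] at this
    exact tendsto_nhds_unique h2' this
  -- part 1: invariance of lam
  haveI : IsProbabilityMeasure (Measure.map σ lam) :=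
    Measure.isProbabilityMeasure_map hσc.measurable.aemeasurable
  have part1 : Measure.map σ lam = lam := by
    refine my_ext_of_forall_integral_eq fun f => ?_
    rw [integral_map hσc.measurable.aemeasurable f.continuous.aestronglyMeasurable]
    exact key f
  refine ⟨part1, fun i => ?_⟩
  -- part 2: marginals
  have hev : Measurable (fun y : Fin d → X => y i) := measurable_pi_apply i
  haveI : IsProbabilityMeasure (Measure.map (fun y : Fin d → X => y i) lam) :=
    Measure.isProbabilityMeasure_map hev.aemeasurable
  have hcomm : ((⇑T)^[i.val + 1]) ∘ (fun y : Fin d → X => y i)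
      = (fun y : Fin d → X => y i) ∘ σ := by
    funext y
    simp [hσdef, Function.comp]
  have hinv : Measure.map ((⇑T)^[i.val + 1]) (Measure.map (fun y : Fin d → X => y i) lam)
      = Measure.map (fun y : Fin d → X => y i) lam := by
    rw [Measure.map_map (T.continuous.measurable.iterate (i.val + 1)) hev, hcomm,
      ← Measure.map_map hev hσc.measurable, part1]
  exact my_pow_invariant_eq T μ huniq hwm (i.val + 1) (Nat.succ_pos _) _ hinv
end
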